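/- Let a, b > 0 and v ∈ ℝ², and define C : ℝ × ℝ → ℝ² by C(θ, t) = e^{t/9}·(a·cosh θ, b·sinh θ) + v. Let D₁ = det(∂_θC, ∂²_θC), D₂ = det(∂_θC, ∂³_θC), D₃ = det(∂_θC, ∂⁴_θC), D₄ = det(∂²_θC, ∂³_θC). Then for all (θ, t): (i) (3·D₁·D₃ − 5·D₂² + 12·D₁·D₄)/D₁² = −9, so the fully affine metric g = √(−(3D₁D₃ − 5D₂² + 12D₁D₄)/D₁²) equals 3 identically; and (ii) ∂_t C(θ, t) = (1/9)·∂²_θ C(θ, t), i.e. C satisfies the fully affine heat flow ∂_t C = g^{−1}∂_θ(g^{−1}∂_θ C). Hence the hyperbola is an expanding soliton of the fully affine heat flow. -/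

import Mathlib

/-- Determinant of the 2×2 matrix with columns `u, w ∈ ℝ²`. -/
def det2 (u w : ℝ × ℝ) : ℝ := u.1 * w.2 - u.2 * w.1

private lemma pair_hasDerivAt_cs (p q : ℝ) (c : ℝ × ℝ) (x : ℝ) :
    HasDerivAt (fun θ' : ℝ => (p * Real.cosh θ' + c.1, q * Real.sinh θ' + c.2))
      (p * Real.sinh x, q * Real.cosh x) x :=
  HasDerivAt.prodMk (((Real.hasDerivAt_cosh x).const_mul p).add_const c.1)
    (((Real.hasDerivAt_sinh x).const_mul q).add_const c.2)

private lemma pair_hasDerivAt_sc (p q : ℝ) (x : ℝ) :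
    HasDerivAt (fun θ' : ℝ => (p * Real.sinh θ', q * Real.cosh θ'))
      (p * Real.cosh x, q * Real.sinh x) x :=
  (HasDerivAt.prodMk ((Real.hasDerivAt_sinh x).const_mul p)
    ((Real.hasDerivAt_cosh x).const_mul q))

private lemma deriv_cs (p q : ℝ) (c : ℝ × ℝ) :
    deriv (fun θ' : ℝ => (p * Real.cosh θ' + c.1, q * Real.sinh θ' + c.2))
      = fun x => (p * Real.sinh x, q * Real.cosh x) :=
  funext fun x => (pair_hasDerivAt_cs p q c x).deriv

private lemma deriv_sc (p q : ℝ) :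
    deriv (fun θ' : ℝ => (p * Real.sinh θ', q * Real.cosh θ'))
      = fun x => (p * Real.cosh x, q * Real.sinh x) :=
  funext fun x => (pair_hasDerivAt_sc p q x).deriv

private lemma deriv_cs' (p q : ℝ) :
    deriv (fun θ' : ℝ => (p * Real.cosh θ', q * Real.sinh θ'))
      = fun x => (p * Real.sinh x, q * Real.cosh x) := by
  have := deriv_cs p q (0, 0)
  simpa using this

/-- Example 7.2: the expanding family of hyperbolas
`C(θ,t) = e^{t/9}(a cosh θ, b sinh θ) + v` has fully affine metric `g ≡ 3`
(with `ε = −1`) and satisfies the fully affine heat flow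
`∂_t C = (1/9)∂²_θ C = ∂²C/∂ξ²`. -/
theorem hyperbola_expanding_soliton
    (a b : ℝ) (ha : 0 < a) (hb : 0 < b) (v : ℝ × ℝ) (θ t : ℝ) :
    let C : ℝ → ℝ → ℝ × ℝ := fun θ' t' =>
      (Real.exp (t' / 9) * (a * Real.cosh θ') + v.1,
       Real.exp (t' / 9) * (b * Real.sinh θ') + v.2)
    let D1 := det2 (deriv (fun θ' => C θ' t) θ) (iteratedDeriv 2 (fun θ' => C θ' t) θ)
    let D2 := det2 (deriv (fun θ' => C θ' t) θ) (iteratedDeriv 3 (fun θ' => C θ' t) θ)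
    let D3 := det2 (deriv (fun θ' => C θ' t) θ) (iteratedDeriv 4 (fun θ' => C θ' t) θ)
    let D4 := det2 (iteratedDeriv 2 (fun θ' => C θ' t) θ) (iteratedDeriv 3 (fun θ' => C θ' t) θ)
    ((3 * D1 * D3 - 5 * D2 ^ 2 + 12 * D1 * D4) / D1 ^ 2 = -9 ∧
      Real.sqrt (-((3 * D1 * D3 - 5 * D2 ^ 2 + 12 * D1 * D4) / D1 ^ 2)) = 3) ∧
    deriv (fun t' => C θ t') t = (1 / 9 : ℝ) • iteratedDeriv 2 (fun θ' => C θ' t) θ := by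
  intro C D1 D2 D3 D4
  set k := Real.exp (t / 9) with hk
  have hkpos : 0 < k := Real.exp_pos _
  -- rewrite the θ-slice in normal form
  have hCθ : (fun θ' => C θ' t)
      = fun θ' => ((k * a) * Real.cosh θ' + v.1, (k * b) * Real.sinh θ' + v.2) := by
    funext θ'; simp only [C, ← hk, mul_assoc]
  -- derivatives in θ
  have h1 : deriv (fun θ' => C θ' t)
      = fun x => ((k * a) * Real.sinh x, (k * b) * Real.cosh x) := by
    rw [hCθ]; exact deriv_cs (k * a) (k * b) v
  have h2 : iteratedDeriv 2 (fun θ' => C θ' t)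
      = fun x => ((k * a) * Real.cosh x, (k * b) * Real.sinh x) := by
    rw [show (2 : ℕ) = 1 + 1 from rfl, iteratedDeriv_succ, iteratedDeriv_one, h1,
      deriv_sc]
  have h3 : iteratedDeriv 3 (fun θ' => C θ' t)
      = fun x => ((k * a) * Real.sinh x, (k * b) * Real.cosh x) := by
    rw [show (3 : ℕ) = 2 + 1 from rfl, iteratedDeriv_succ, h2, deriv_cs']
  have h4 : iteratedDeriv 4 (fun θ' => C θ' t)
      = fun x => ((k * a) * Real.cosh x, (k * b) * Real.sinh x) := by
    rw [show (4 : ℕ) = 3 + 1 from rfl, iteratedDeriv_succ, h3, deriv_sc]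
  have hcs : Real.cosh θ ^ 2 - Real.sinh θ ^ 2 = 1 := Real.cosh_sq_sub_sinh_sq θ
  have hD1 : D1 = -(k ^ 2 * a * b) := by
    simp only [D1, det2, h1, h2]
    linear_combination (-(k ^ 2 * a * b)) * hcs
  have hD2 : D2 = 0 := by
    simp only [D2, det2, h1, h3]; ring
  have hD3 : D3 = D1 := by
    simp only [D3, D1, det2, h1, h2, h4]
  have hD4 : D4 = -D1 := by
    simp only [D4, D1, det2, h1, h2, h3]; ring
  have hD1ne : D1 ≠ 0 := by
    rw [hD1]
    have : 0 < k ^ 2 * a * b := by positivity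
    linarith
  have hnum : 3 * D1 * D3 - 5 * D2 ^ 2 + 12 * D1 * D4 = -9 * D1 ^ 2 := by
    rw [hD2, hD3, hD4]; ring
  have hfrac : (3 * D1 * D3 - 5 * D2 ^ 2 + 12 * D1 * D4) / D1 ^ 2 = -9 := by
    rw [hnum, mul_div_assoc, div_self (pow_ne_zero 2 hD1ne), mul_one]
  refine ⟨⟨hfrac, ?_⟩, ?_⟩
  · rw [hfrac]
    norm_num
  · -- time derivative
    have hexp : HasDerivAt (fun t' : ℝ => Real.exp (t' / 9)) (Real.exp (t / 9) * (1 / 9)) t := by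
      simpa using (((hasDerivAt_id t).div_const 9).exp)
    have hT : HasDerivAt (fun t' => C θ t')
        ((Real.exp (t / 9) * (1 / 9)) * (a * Real.cosh θ),
         (Real.exp (t / 9) * (1 / 9)) * (b * Real.sinh θ)) t := by
      exact HasDerivAt.prodMk ((hexp.mul_const (a * Real.cosh θ)).add_const v.1)
        ((hexp.mul_const (b * Real.sinh θ)).add_const v.2)
    rw [hT.deriv, h2, Prod.smul_def]
    simp only [smul_eq_mul]
    rw [Prod.mk.injEq]
    constructor <;> · simp only [← hk]; ring
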